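/- Let P be a noncompact locally compact Hausdorff space in which every σ-compact subset has compact closure, and let K = K(P) = (αP × ℕ∞) \ {(∞_P, ∞)}. Then there is no frame in C₀(K): there exist no index set J, no family (x_j)_{j∈J} of elements of C₀(K), and no constants 0 < c₁ ≤ c₂ forming a pointwise frame, i.e., such that for every t ∈ K the family (|x_j(t)|²)_{j∈J} is summable and c₁ ≤ Σ_{j∈J} |x_j(t)|² ≤ c₂. -/

import Mathlib

open ZeroAtInfty OnePoint

open Filter Topology Set

universe u

/-- `K(P) = (αP × ℕ∞) \ {(∞_P, ∞)}`, where `αP` and `ℕ∞` are the one-point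
compactifications of `P` and of `ℕ`, with the subspace topology. -/
abbrev deletedPlank (P : Type*) [TopologicalSpace P] : Type _ :=
  {q : OnePoint P × OnePoint ℕ // q ≠ (∞, ∞)}

/-- Let `P` be a noncompact locally compact Hausdorff space in which every `σ`-compact
subset has compact closure, and let `K = (αP × ℕ∞) \ {(∞_P, ∞)}`. Then there is no
(pointwise) frame in `C₀(K)`: there are no index set `J`, family `(x j)` in `C₀(K)` and
constants `0 < c₁ ≤ c₂` such that for every `t ∈ K` the family `(‖x j t‖ ^ 2)` is
summable with `c₁ ≤ ∑' j, ‖x j t‖ ^ 2 ≤ c₂`. -/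
theorem no_frame_of_deletedPlank
    (P : Type*) [TopologicalSpace P] [LocallyCompactSpace P] [T2Space P]
    (hnc : ¬ CompactSpace P)
    (hIV : ∀ s : Set P, IsSigmaCompact s → IsCompact (closure s)) :
    ¬ ∃ (J : Type u) (x : J → C₀(deletedPlank P, ℂ)) (c₁ c₂ : ℝ), 0 < c₁ ∧ c₁ ≤ c₂ ∧
        ∀ t : deletedPlank P, Summable (fun j : J => ‖x j t‖ ^ 2) ∧
          c₁ ≤ ∑' j : J, ‖x j t‖ ^ 2 ∧ (∑' j : J, ‖x j t‖ ^ 2) ≤ c₂ := by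
  rintro ⟨J, x, c₁, c₂, hc₁, hc₁₂, hframe⟩
  classical
  -- the embedding of `P` onto the row `P × {∞}` of the deleted plank
  have hne : ∀ p : P, ((p : OnePoint P), (∞ : OnePoint ℕ)) ≠ ((∞ : OnePoint P), (∞ : OnePoint ℕ)) :=
    fun p h => OnePoint.coe_ne_infty p (congrArg Prod.fst h)
  set ι : P → deletedPlank P := fun p => ⟨(↑p, ∞), hne p⟩ with hιdef
  have hιcont : Continuous ι :=
    Continuous.subtype_mk (OnePoint.continuous_coe.prodMk continuous_const) _
  have hιind : IsInducing ι := by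
    have h1 : IsEmbedding (fun a : OnePoint P => ((∞ : OnePoint ℕ), a)) := isEmbedding_prodMkRight _
    have h2 : IsEmbedding ((Prod.swap ∘ fun a : OnePoint P => ((∞ : OnePoint ℕ), a)) ∘
        ((↑) : P → OnePoint P)) :=
      (((Homeomorph.prodComm _ _).isEmbedding.comp h1).comp
        OnePoint.isOpenEmbedding_coe.isEmbedding)
    exact IsInducing.of_comp hιcont continuous_subtype_val h2.isInducing
  have hrangeeq : Set.range ι = {t : deletedPlank P | t.1.2 = ∞} := by
    ext t
    constructor
    · rintro ⟨p, rfl⟩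
      rfl
    · intro ht
      obtain ⟨⟨a, b⟩, hab⟩ := t
      simp only [Set.mem_setOf_eq] at ht
      subst ht
      induction a using OnePoint.rec with
      | infty => exact absurd rfl hab
      | coe p => exact ⟨p, rfl⟩
  have hrange : IsClosed (Set.range ι) := by
    rw [hrangeeq]
    exact isClosed_eq (continuous_snd.comp continuous_subtype_val) continuous_const
  -- the restricted family
  set φ : J → P → ℝ := fun j p => ‖x j (ι p)‖ ^ 2 with hφdef
  have hφ0 : ∀ j p, 0 ≤ φ j p := fun j p => pow_nonneg (norm_nonneg _) 2
  have hφcont : ∀ j, Continuous (φ j) := fun j =>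
    (((map_continuous (x j)).comp hιcont).norm).pow 2
  have hsum : ∀ p, Summable (fun j => φ j p) := fun p => (hframe (ι p)).1
  have hlb : ∀ p, c₁ ≤ ∑' j, φ j p := fun p => (hframe (ι p)).2.1
  have hub : ∀ p, (∑' j, φ j p) ≤ c₂ := fun p => (hframe (ι p)).2.2
  -- superlevel sets of each `φ j` are compact
  have hlevel : ∀ (j : J) (ε : ℝ), 0 < ε → IsCompact {p : P | ε ≤ φ j p} := by
    intro j ε hε
    have htend : Tendsto (fun t => ‖x j t‖ ^ 2) (cocompact (deletedPlank P)) (𝓝 0) := by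
      have h0 : Tendsto (fun t => ‖x j t‖) (cocompact (deletedPlank P)) (𝓝 0) := by
        simpa using (zero_at_infty (x j)).norm
      simpa using h0.pow 2
    have hev : ∀ᶠ t in cocompact (deletedPlank P), ‖x j t‖ ^ 2 < ε :=
      htend.eventually (eventually_lt_nhds hε)
    obtain ⟨S, hS, hsub⟩ := Filter.mem_cocompact.mp hev
    have hsetsub : {t : deletedPlank P | ε ≤ ‖x j t‖ ^ 2} ⊆ S := by
      intro t ht
      by_contra h
      have h2 := hsub h
      simp only [Set.mem_setOf_eq] at h2 ht
      linarith
    have hclosed : IsClosed {t : deletedPlank P | ε ≤ ‖x j t‖ ^ 2} :=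
      isClosed_le continuous_const (((map_continuous (x j)).norm).pow 2)
    have hScpt : IsCompact {t : deletedPlank P | ε ≤ ‖x j t‖ ^ 2} :=
      hS.of_isClosed_subset hclosed hsetsub
    exact hιind.isCompact_preimage hrange hScpt
  -- supports have compact closure
  have hsupp : ∀ j, IsCompact (closure {p | φ j p ≠ 0}) := by
    intro j
    apply hIV
    refine ⟨fun n => {p | 1 / (n + 1 : ℝ) ≤ φ j p}, fun n => hlevel j _ (by positivity), ?_⟩
    ext p
    simp only [Set.mem_iUnion, Set.mem_setOf_eq]
    constructor
    · rintro ⟨n, hn⟩ h0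
      rw [h0] at hn
      have : (0 : ℝ) < 1 / (n + 1 : ℝ) := by positivity
      linarith
    · intro hp
      have hpos : 0 < φ j p := lt_of_le_of_ne (hφ0 j p) (Ne.symm hp)
      obtain ⟨n, hn⟩ := exists_nat_one_div_lt hpos
      exact ⟨n, hn.le⟩
  -- achievable masses
  set Ach : ℝ → Prop := fun m =>
    ∀ C : Set P, IsCompact C → ∃ q, q ∉ C ∧ ∃ G : Finset J, m < ∑ j ∈ G, φ j q with hAchdef
  have hbase : Ach (c₁ / 2) := by
    intro C hC
    have hCne : Cᶜ.Nonempty := by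
      by_contra h
      rw [Set.not_nonempty_iff_eq_empty, Set.compl_empty_iff] at h
      exact hnc (isCompact_univ_iff.mp (h ▸ hC))
    obtain ⟨q, hq⟩ := hCne
    have h1 : c₁ / 2 < ∑' j, φ j q := lt_of_lt_of_le (by linarith) (hlb q)
    obtain ⟨G, hG⟩ : ∃ G : Finset J, c₁ / 2 < ∑ j ∈ G, φ j q :=
      (Filter.Tendsto.eventually (hsum q).hasSum (eventually_gt_nhds h1)).exists
    exact ⟨q, hq, G, hG⟩
  have hkey : ∀ m, Ach m → Ach (m + c₁ / 2) := by
    intro m hm C hC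
    set D : Finset J → Set P := fun A => C ∪ ⋃ j ∈ A, closure {p | φ j p ≠ 0} with hDdef
    have hDcpt : ∀ A, IsCompact (D A) := fun A =>
      hC.union (A.isCompact_biUnion fun j _ => hsupp j)
    have hpick : ∀ A : Finset J, ∃ q, q ∉ D A ∧ ∃ G : Finset J,
        (∀ j ∈ G, φ j q ≠ 0) ∧ m < ∑ j ∈ G, φ j q := by
      intro A
      obtain ⟨q, hq, G₀, hG₀⟩ := hm (D A) (hDcpt A)
      refine ⟨q, hq, G₀.filter (fun j => φ j q ≠ 0),
        fun j hj => (Finset.mem_filter.mp hj).2, ?_⟩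
      rwa [Finset.sum_filter_ne_zero]
    choose qf pick using hpick
    choose Gf hGne hGsum using fun A => (pick A).2
    have hq0 : ∀ A, qf A ∉ D A := fun A => (pick A).1
    set A : ℕ → Finset J := fun k =>
      Nat.rec (motive := fun _ => Finset J) (∅ : Finset J) (fun _ Ak => Ak ∪ Gf Ak) k with hAdef
    set q : ℕ → P := fun k => qf (A k) with hqdef
    set G : ℕ → Finset J := fun k => Gf (A k) with hGdef
    have hAsucc : ∀ k, A (k + 1) = A k ∪ G k := fun k => rfl
    have hAmono : Monotone A := monotone_nat_of_le_succ fun n => by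
      rw [hAsucc]; exact Finset.subset_union_left
    have hGA : ∀ i k, i < k → G i ⊆ A k := by
      intro i k hik
      have h1 : G i ⊆ A (i + 1) := by rw [hAsucc]; exact Finset.subset_union_right
      exact h1.trans (hAmono (Nat.succ_le_of_lt hik))
    have hφzero : ∀ k j, j ∈ A k → φ j (q k) = 0 := by
      intro k j hj
      by_contra h
      apply hq0 (A k)
      exact Or.inr (Set.mem_biUnion hj (subset_closure h))
    have hdisjG : ∀ i k, i < k → Disjoint (G i) (G k) := by
      intro i k hik
      rw [Finset.disjoint_left]
      intro j hji hjk
      exact (hGne (A k) j hjk) (hφzero k j (hGA i k hik hji))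
    -- a cluster point of the sequence `q`
    have hrangecpt : IsCompact (closure (Set.range q)) := by
      apply hIV
      refine ⟨fun n => {q n}, fun n => isCompact_singleton, ?_⟩
      ext p
      simp [eq_comm]
    haveI : (Filter.map q atTop).NeBot := Filter.map_neBot
    have hle : Filter.map q atTop ≤ 𝓟 (closure (Set.range q)) := by
      rw [Filter.le_principal_iff, Filter.mem_map]
      exact Filter.Eventually.of_forall fun k => subset_closure (Set.mem_range_self k)
    obtain ⟨qs, _, hqscl⟩ := hrangecpt.exists_clusterPt hle
    obtain ⟨Gs, hGs⟩ : ∃ Gs : Finset J, c₁ / 2 < ∑ j ∈ Gs, φ j qs :=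
      (Filter.Tendsto.eventually (hsum qs).hasSum
        (eventually_gt_nhds (lt_of_lt_of_le (by linarith) (hlb qs)))).exists
    set U : Set P := {p | c₁ / 2 < ∑ j ∈ Gs, φ j p} with hUdef
    have hUopen : IsOpen U :=
      isOpen_lt continuous_const (continuous_finset_sum _ fun j _ => hφcont j)
    have hfreq : ∃ᶠ k in atTop, q k ∈ U :=
      mapClusterPt_iff_frequently.mp hqscl U (hUopen.mem_nhds hGs)
    have hev : ∀ᶠ k in atTop, Disjoint (G k) Gs := by
      have hfin : {k | ¬ Disjoint (G k) Gs}.Finite := by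
        have hsub : {k | ¬ Disjoint (G k) Gs} ⊆ ⋃ j ∈ (Gs : Set J), {k | j ∈ G k} := by
          intro k hk
          obtain ⟨j, hjGk, hjGs⟩ := Finset.not_disjoint_iff.mp hk
          exact Set.mem_biUnion hjGs hjGk
        refine Set.Finite.subset (Set.Finite.biUnion Gs.finite_toSet fun j _ => ?_) hsub
        apply Set.Subsingleton.finite
        intro k1 h1 k2 h2
        by_contra hne'
        rcases Nat.lt_or_ge k1 k2 with h | h
        · exact Finset.disjoint_left.mp (hdisjG k1 k2 h) h1 h2
        · rcases Nat.lt_or_ge k2 k1 with h' | h'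
          · exact Finset.disjoint_left.mp (hdisjG k2 k1 h') h2 h1
          · exact hne' (le_antisymm h' h)
      have := hfin.eventually_cofinite_notMem
      rw [Nat.cofinite_eq_atTop] at this
      filter_upwards [this] with k hk
      exact not_not.mp hk
    obtain ⟨k, hkU, hkdisj⟩ := (hfreq.and_eventually hev).exists
    refine ⟨q k, fun hqC => hq0 (A k) (Or.inl hqC), Gs ∪ G k, ?_⟩
    rw [Finset.sum_union hkdisj.symm]
    have h1 : c₁ / 2 < ∑ j ∈ Gs, φ j (q k) := hkU
    have h2 : m < ∑ j ∈ G k, φ j (q k) := hGsum (A k)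
    linarith
  -- iterate
  have hall : ∀ n : ℕ, Ach (c₁ / 2 + n * (c₁ / 2)) := by
    intro n
    induction n with
    | zero => simpa using hbase
    | succ n ih =>
      have harith : c₁ / 2 + ((n : ℝ) + 1) * (c₁ / 2) = (c₁ / 2 + n * (c₁ / 2)) + c₁ / 2 := by
        ring
      push_cast
      rw [harith]
      exact hkey _ ih
  obtain ⟨n, hn⟩ := exists_nat_gt ((c₂ - c₁ / 2) / (c₁ / 2))
  obtain ⟨p, -, G, hG⟩ := hall n ∅ isCompact_empty
  have hle : ∑ j ∈ G, φ j p ≤ c₂ :=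
    le_trans (sum_le_hasSum G (fun j _ => hφ0 j p) (hsum p).hasSum) (hub p)
  have h2 : (0 : ℝ) < c₁ / 2 := by linarith
  rw [div_lt_iff₀ h2] at hn
  linarith
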